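/- Let $n \ge 1$, $A > 0$, and real numbers $F, F', F'', x$ with $x \ge 0$. Set $C = F'^2 x - (F'' x + F')A$ and let $z_0 \in \mathbb{C}$ with $|z_0|^2 = x$, and $z_1,\dots,z_{n-1} \in \mathbb{C}$. Consider the $n \times n$ Hermitian matrix $h$ with entries $h_{00} = C/A^2$, $h_{0\beta} = -F' \bar z_0 z_\beta / A^2$ for $\beta \ge 1$, and $h_{\alpha\beta} = (\delta_{\alpha\beta} A + \bar z_\alpha z_\beta)/A^2$ for $\alpha,\beta \ge 1$. Then $\det(h) = \frac{1}{A^{n+2}}\big[ CA + (C - F'^2 x)(|z_1|^2 + \cdots + |z_{n-1}|^2) \big]$. -/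

import Mathlib

open Matrix Finset

lemma aux_det_unique {K : Type*} [CommRing K] {ι : Type*} [Unique ι] (M : Matrix ι ι K) :
    M.det = M default default := Matrix.det_unique M

lemma aux_det_diag_unit {K : Type*} [Field K] {n : ℕ} (d u v : Fin n → K)
    (hd : ∀ i, d i ≠ 0) :
    (Matrix.of fun i j => (if i = j then d i else 0) + u i * v j).det
      = ∏ i, d i + ∑ i, u i * v i * ∏ j ∈ Finset.univ.erase i, d j := by
  have hM : (Matrix.of fun i j => (if i = j then d i else 0) + u i * v j)
      = Matrix.diagonal d + Matrix.replicateCol (Fin 1) u * Matrix.replicateRow (Fin 1) v := by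
    ext i j
    simp [Matrix.mul_apply, Matrix.diagonal, Matrix.of_apply]
  have hdet : IsUnit (Matrix.diagonal d).det := by
    rw [Matrix.det_diagonal]
    exact (Finset.prod_ne_zero_iff.mpr fun i _ => hd i).isUnit
  have hinv : (Matrix.diagonal d)⁻¹ = Matrix.diagonal (fun i => (d i)⁻¹) :=
    Matrix.inv_eq_right_inv (by
      rw [Matrix.diagonal_mul_diagonal,
        show (fun i => d i * (d i)⁻¹) = fun _ => (1 : K) from funext fun i => mul_inv_cancel₀ (hd i),
        Matrix.diagonal_one])
  rw [hM]
  erw [Matrix.det_add_replicateCol_mul_replicateRow (ι := Fin 1) hdet]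
  rw [Matrix.det_diagonal, aux_det_unique]
  simp only [Matrix.add_apply, Matrix.one_apply_eq, Matrix.mul_apply, Matrix.replicateRow_apply,
    Matrix.replicateCol_apply, hinv, Matrix.diagonal_apply, Finset.sum_mul,
    ite_mul, mul_ite, mul_zero, zero_mul, Finset.sum_ite_eq, Finset.sum_ite_eq', Finset.mem_univ, if_true,
    Ring.inverse_eq_inv]
  rw [mul_add, mul_one, Finset.mul_sum]
  congr 1
  refine Finset.sum_congr rfl fun i _ => ?_
  rw [← Finset.mul_prod_erase _ _ (Finset.mem_univ i)]
  field_simp [hd i]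

open Polynomial in
lemma aux_det_diag {n : ℕ} (d u v : Fin n → ℂ) :
    (Matrix.of fun i j => (if i = j then d i else 0) + u i * v j).det
      = ∏ i, d i + ∑ i, u i * v i * ∏ j ∈ Finset.univ.erase i, d j := by
  set P : Polynomial ℂ :=
    (Matrix.of fun i j => (if i = j then Polynomial.C (d i) - Polynomial.X else 0)
      + Polynomial.C (u i) * Polynomial.C (v j)).det with hP
  set Q : Polynomial ℂ := ∏ i, (Polynomial.C (d i) - Polynomial.X)
      + ∑ i, Polynomial.C (u i) * Polynomial.C (v i)
          * ∏ j ∈ Finset.univ.erase i, (Polynomial.C (d j) - Polynomial.X) with hQ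
  have hPe : ∀ t : ℂ, P.eval t
      = (Matrix.of fun i j => (if i = j then d i - t else 0) + u i * v j).det := by
    intro t
    have hmap : (Polynomial.evalRingHom t).mapMatrix
        (Matrix.of fun i j => (if i = j then Polynomial.C (d i) - Polynomial.X else 0)
          + Polynomial.C (u i) * Polynomial.C (v j))
        = Matrix.of fun i j => (if i = j then d i - t else 0) + u i * v j := by
      ext i j
      simp [RingHom.mapMatrix_apply, Matrix.map_apply, apply_ite (Polynomial.eval t)]
    rw [hP, show Polynomial.eval t
        ((Matrix.of fun i j => (if i = j then Polynomial.C (d i) - Polynomial.X else 0)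
          + Polynomial.C (u i) * Polynomial.C (v j)).det)
        = _ from RingHom.map_det (Polynomial.evalRingHom t) _, hmap]
  have hQe : ∀ t : ℂ, Q.eval t
      = ∏ i, (d i - t) + ∑ i, u i * v i * ∏ j ∈ Finset.univ.erase i, (d j - t) := by
    intro t
    simp [hQ, Polynomial.eval_prod, Polynomial.eval_finset_sum]
  have hPQ : P = Q := by
    apply Polynomial.eq_of_infinite_eval_eq
    apply Set.Infinite.mono (s := (Set.range d)ᶜ)
    · intro t ht
      have hd : ∀ i, d i - t ≠ 0 := fun i hi => ht ⟨i, by linear_combination hi⟩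
      simp only [Set.mem_setOf_eq, hPe, hQe, aux_det_diag_unit _ _ _ hd]
    · exact Set.Finite.infinite_compl (Set.finite_range d)
  have := congrArg (Polynomial.eval 0) hPQ
  rw [hPe, hQe] at this
  simpa using this


/-- Laplace-expansion determinant formula for the complex Hessian
matrix `h` of the Hartogs potential:
`det h = (1/A^(n+2)) [CA + (C - F'^2 x)(|z_1|^2 + ⋯ + |z_{n-1}|^2)]`. -/
theorem stmt_1 (n : ℕ) [NeZero n] (A x F F' F'' C : ℝ) (hA : 0 < A) (hx : 0 ≤ x)
    (hC : C = F' ^ 2 * x - (F'' * x + F') * A)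
    (z : Fin n → ℂ) (hz0 : Complex.normSq (z 0) = x) :
    (Matrix.of fun a b : Fin n =>
        if a = 0 then
          (if b = 0 then (C : ℂ) / (A : ℂ) ^ 2
           else -(F' : ℂ) * (starRingEnd ℂ) (z 0) * z b / (A : ℂ) ^ 2)
        else if b = 0 then -(F' : ℂ) * z 0 * (starRingEnd ℂ) (z a) / (A : ℂ) ^ 2
        else ((if a = b then (A : ℂ) else 0) + (starRingEnd ℂ) (z a) * z b) / (A : ℂ) ^ 2).det
      = ((1 / A ^ (n + 2) *
          (C * A + (C - F' ^ 2 * x) * ∑ k ∈ Finset.univ.erase 0, Complex.normSq (z k)) : ℝ) : ℂ) := by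
  have ha : (A : ℂ) ≠ 0 := Complex.ofReal_ne_zero.mpr hA.ne'
  have hzz : (starRingEnd ℂ) (z 0) * z 0 = (x : ℂ) := by
    rw [← hz0, Complex.normSq_eq_conj_mul_self]
  rcases Nat.exists_eq_succ_of_ne_zero (NeZero.ne n) with ⟨m, rfl⟩
  set d : Fin (m + 1) → ℂ := fun i => if i = 0 then (C : ℂ) - (F' : ℂ) ^ 2 * (x : ℂ) else (A : ℂ)
    with hd
  set u : Fin (m + 1) → ℂ := fun i => if i = 0 then -(F' : ℂ) * (starRingEnd ℂ) (z 0)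
    else (starRingEnd ℂ) (z i) with hu
  set v : Fin (m + 1) → ℂ := fun j => if j = 0 then -(F' : ℂ) * z 0 else z j with hv
  have hM : (Matrix.of fun a b : Fin (m + 1) =>
        if a = 0 then
          (if b = 0 then (C : ℂ) / (A : ℂ) ^ 2
           else -(F' : ℂ) * (starRingEnd ℂ) (z 0) * z b / (A : ℂ) ^ 2)
        else if b = 0 then -(F' : ℂ) * z 0 * (starRingEnd ℂ) (z a) / (A : ℂ) ^ 2
        else ((if a = b then (A : ℂ) else 0) + (starRingEnd ℂ) (z a) * z b) / (A : ℂ) ^ 2)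
      = (1 / (A : ℂ) ^ 2) • Matrix.of fun i j => (if i = j then d i else 0) + u i * v j := by
    ext i j
    simp only [Matrix.of_apply, Matrix.smul_apply, smul_eq_mul, hd, hu, hv]
    by_cases hi : i = 0 <;> by_cases hj : j = 0
    · subst hi; subst hj
      simp only [if_pos rfl, ↓reduceIte]
      field_simp
      linear_combination -(F' : ℂ) ^ 2 * hzz
    · subst hi
      simp [hj, Ne.symm hj]
      ring
    · subst hj
      simp [hi, Ne.symm hi]
      ring
    · by_cases hij : i = j
      · subst hij; simp [hi]; ring
      · simp [hi, hj, hij]; ring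
  rw [hM, Matrix.det_smul, aux_det_diag]
  have hprodE : ∏ j ∈ Finset.univ.erase (0 : Fin (m+1)), d j = (A : ℂ) ^ m := by
    rw [Finset.prod_congr rfl fun i hi => if_neg (Finset.ne_of_mem_erase hi)]
    rw [Finset.prod_const, Finset.card_erase_of_mem (Finset.mem_univ _), Finset.card_univ,
      Fintype.card_fin, Nat.add_sub_cancel]
  have hprod : ∏ i, d i = ((C : ℂ) - (F' : ℂ) ^ 2 * (x : ℂ)) * (A : ℂ) ^ m := by
    rw [← Finset.mul_prod_erase _ _ (Finset.mem_univ (0 : Fin (m+1))), hprodE]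
    simp [hd]
  have hsum : ∑ i, u i * v i * ∏ j ∈ Finset.univ.erase i, d j
      = (F' : ℂ) ^ 2 * (x : ℂ) * (A : ℂ) ^ m
        + ((C : ℂ) - (F' : ℂ) ^ 2 * (x : ℂ)) * (A : ℂ) ^ (m - 1)
          * ∑ k ∈ Finset.univ.erase (0 : Fin (m+1)), (Complex.normSq (z k) : ℂ) := by
    rw [← Finset.add_sum_erase _ _ (Finset.mem_univ (0 : Fin (m+1))), hprodE]
    congr 1
    · simp only [hu, hv, if_pos rfl]
      linear_combination (F' : ℂ) ^ 2 * (A:ℂ) ^ m * hzz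
    · rw [Finset.mul_sum]
      refine Finset.sum_congr rfl fun i hi => ?_
      have hi0 : i ≠ 0 := Finset.ne_of_mem_erase hi
      have h0mem : (0 : Fin (m+1)) ∈ Finset.univ.erase i := by
        simp [Ne.symm hi0]
      have hprod2 : ∏ j ∈ Finset.univ.erase i, d j
          = ((C : ℂ) - (F' : ℂ) ^ 2 * (x : ℂ)) * (A : ℂ) ^ (m - 1) := by
        rw [← Finset.mul_prod_erase _ _ h0mem]
        rw [Finset.prod_congr rfl fun j hj => if_neg (Finset.ne_of_mem_erase hj)]
        rw [Finset.prod_const, Finset.card_erase_of_mem h0mem,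
          Finset.card_erase_of_mem (Finset.mem_univ _), Finset.card_univ, Fintype.card_fin]
        simp [hd]
      rw [hprod2]
      simp only [hu, hv, if_neg hi0]
      rw [Complex.normSq_eq_conj_mul_self]
      ring
  rw [hprod, hsum, Fintype.card_fin]
  push_cast
  rcases m with _ | k
  · have he : ∑ k ∈ (Finset.univ.erase 0), (Complex.normSq (z k) : ℂ) = 0 :=
      Finset.sum_eq_zero fun k hk =>
        absurd (Subsingleton.elim k 0) (Finset.ne_of_mem_erase hk)
    rw [he]
    simp only [mul_zero, add_zero, pow_zero]
    simp only [Nat.succ_eq_add_one, zero_add]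
    field_simp
    ring
  · simp only [Nat.succ_eq_add_one, Nat.add_sub_cancel]
    rw [div_pow, one_pow, ← pow_mul]
    field_simp
    ring
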